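/- Let H be a complex Hilbert space, A a self-adjoint operator on H, and J an anti-unitary involution on H such that J e^{itA} J = e^{itA} for all real t. Then for every bounded Borel function f : ℝ → ℂ, one has f(-A) = J \overline{f}(A) J; in particular, for every Borel set B ⊆ ℝ, the spectral projections satisfy 1_{-B}(A) = J 1_B(A) J. -/

import Mathlib

open Filter Set MeasureTheory Complex Topology



/-!
STATEMENT 0: If `J` is an anti-unitary involution on a complex Hilbert space `H`, `A` is a
self-adjoint operator on `H` with bounded Borel functional calculus `Φ` (so that
`Φ f = f(A)`, and `e^{itA} = Φ (s ↦ exp(its))`), and `J e^{itA} J = e^{itA}` for all real `t`,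
then for every bounded Borel `f : ℝ → ℂ` one has `f(-A) = J (conj f)(A) J`; in particular for
every Borel set `B ⊆ ℝ`, `1_{-B}(A) = J 1_B(A) J`.
-/
theorem stmt0 {H : Type*} [NormedAddCommGroup H] [InnerProductSpace ℂ H] [CompleteSpace H]
    (J : H → H)
    (hJadd : ∀ x y, J (x + y) = J x + J y)
    (hJsmul : ∀ (c : ℂ) (x : H), J (c • x) = (starRingEnd ℂ c) • J x)
    (hJinner : ∀ x y, (inner ℂ (J x) (J y) : ℂ) = inner ℂ y x)
    (hJinv : ∀ x, J (J x) = x)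
    -- `Φ` is the bounded Borel functional calculus of the self-adjoint operator `A`
    (Φ : (ℝ → ℂ) → (H →L[ℂ] H))
    (hΦadd : ∀ f g : ℝ → ℂ, Measurable f → Measurable g →
      (∃ C, ∀ s, ‖f s‖ ≤ C) → (∃ C, ∀ s, ‖g s‖ ≤ C) →
      Φ (f + g) = Φ f + Φ g)
    (hΦsmul : ∀ (c : ℂ) (f : ℝ → ℂ), Measurable f → (∃ C, ∀ s, ‖f s‖ ≤ C) →
      Φ (c • f) = c • Φ f)
    -- dominated convergence for the functional calculus
    (hΦcont : ∀ (f : ℕ → ℝ → ℂ) (g : ℝ → ℂ) (C : ℝ), (∀ n, Measurable (f n)) →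
      Measurable g → (∀ n s, ‖f n s‖ ≤ C) →
      (∀ s, Filter.Tendsto (fun n => f n s) Filter.atTop (nhds (g s))) →
      ∀ x, Filter.Tendsto (fun n => Φ (f n) x) Filter.atTop (nhds (Φ g x)))
    -- hypothesis: `J e^{itA} J = e^{itA}` for all `t ∈ ℝ`
    (hU : ∀ (t : ℝ) (x : H),
      J (Φ (fun s => Complex.exp (Complex.I * ((t : ℂ) * (s : ℂ)))) (J x)) =
        Φ (fun s => Complex.exp (Complex.I * ((t : ℂ) * (s : ℂ)))) x) :
    (∀ f : ℝ → ℂ, Measurable f → (∃ C, ∀ s, ‖f s‖ ≤ C) →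
      ∀ x, Φ (fun s => f (-s)) x = J (Φ (fun s => starRingEnd ℂ (f s)) (J x))) ∧
    (∀ B : Set ℝ, MeasurableSet B →
      ∀ x, Φ (Set.indicator (-B) (fun _ => (1 : ℂ))) x =
        J (Φ (Set.indicator B (fun _ => (1 : ℂ))) (J x))) := by
  classical
  have hJ0 : J 0 = 0 := by
    have h := hJadd 0 0
    simp only [add_zero] at h
    exact (left_eq_add.mp h)
  have hJneg : ∀ x, J (-x) = - J x := by
    intro x; have := hJsmul (-1) x; simpa using this
  have hJsub : ∀ x y, J (x - y) = J x - J y := by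
    intro x y; rw [sub_eq_add_neg, hJadd, hJneg, sub_eq_add_neg]
  have hJnorm : ∀ x, ‖J x‖ = ‖x‖ := by
    intro x
    have h := hJinner x x
    rw [inner_self_eq_norm_sq_to_K, inner_self_eq_norm_sq_to_K] at h
    have h2 : (‖J x‖ : ℝ) ^ 2 = (‖x‖ : ℝ) ^ 2 := by exact_mod_cast h
    nlinarith [norm_nonneg (J x), norm_nonneg x]
  have hJcont : Continuous J :=
    (Isometry.of_dist_eq (fun x y => by
      rw [dist_eq_norm, dist_eq_norm, ← hJsub, hJnorm])).continuous
  have mconj : ∀ {f : ℝ → ℂ}, Measurable f → Measurable (fun s => starRingEnd ℂ (f s)) :=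
    fun hf => Complex.continuous_conj.measurable.comp hf
  have mneg : ∀ {f : ℝ → ℂ}, Measurable f → Measurable (fun s => f (-s)) :=
    fun hf => hf.comp measurable_neg
  set P : (ℝ → ℂ) → Prop := fun f =>
    ∀ x, Φ (fun s => f (-s)) x = J (Φ (fun s => starRingEnd ℂ (f s)) (J x)) with hP
  have P_lim : ∀ (f : ℕ → ℝ → ℂ) (g : ℝ → ℂ) (C : ℝ), (∀ n, Measurable (f n)) →
      Measurable g → (∀ n s, ‖f n s‖ ≤ C) →
      (∀ s, Tendsto (fun n => f n s) atTop (𝓝 (g s))) → (∀ n, P (f n)) → P g := by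
    intro f g C hm hg hC hlim hPf x
    have h1 := hΦcont (fun n s => f n (-s)) (fun s => g (-s)) C
      (fun n => mneg (hm n)) (mneg hg) (fun n s => hC n (-s)) (fun s => hlim (-s)) x
    have h2 := hΦcont (fun n s => starRingEnd ℂ (f n s)) (fun s => starRingEnd ℂ (g s)) C
      (fun n => mconj (hm n)) (mconj hg)
      (fun n s => by simpa [Complex.norm_conj] using hC n s)
      (fun s => (Complex.continuous_conj.tendsto _).comp (hlim s)) (J x)
    have h2' := (hJcont.tendsto _).comp h2
    have h1' : Tendsto (fun n => J (Φ (fun s => starRingEnd ℂ (f n s)) (J x))) atTop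
        (𝓝 (Φ (fun s => g (-s)) x)) := h1.congr (fun n => hPf n x)
    exact tendsto_nhds_unique h1' h2'
  have P_add : ∀ f g : ℝ → ℂ, Measurable f → Measurable g →
      (∃ C, ∀ s, ‖f s‖ ≤ C) → (∃ C, ∀ s, ‖g s‖ ≤ C) →
      P f → P g → P (fun s => f s + g s) := by
    intro f g hf hg hbf hbg hPf hPg x
    obtain ⟨Cf, hCf⟩ := hbf
    obtain ⟨Cg, hCg⟩ := hbg
    have eL : (fun s => f (-s) + g (-s)) = (fun s => f (-s)) + (fun s => g (-s)) := rfl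
    have eR : (fun s => starRingEnd ℂ (f s + g s)) =
        (fun s => starRingEnd ℂ (f s)) + (fun s => starRingEnd ℂ (g s)) := by
      funext s; simp
    show Φ (fun s => f (-s) + g (-s)) x = _
    rw [eL, eR, hΦadd _ _ (mneg hf) (mneg hg) ⟨Cf, fun s => hCf (-s)⟩ ⟨Cg, fun s => hCg (-s)⟩,
      hΦadd _ _ (mconj hf) (mconj hg) ⟨Cf, fun s => by simpa [Complex.norm_conj] using hCf s⟩
        ⟨Cg, fun s => by simpa [Complex.norm_conj] using hCg s⟩]
    simp only [ContinuousLinearMap.add_apply]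
    rw [hJadd, hPf x, hPg x]
  have P_smul : ∀ (c : ℂ) (f : ℝ → ℂ), Measurable f →
      (∃ C, ∀ s, ‖f s‖ ≤ C) → P f → P (fun s => c * f s) := by
    intro c f hf hbf hPf x
    obtain ⟨Cf, hCf⟩ := hbf
    have eL : (fun s => c * f (-s)) = c • (fun s => f (-s)) := rfl
    have eR : (fun s => starRingEnd ℂ (c * f s)) =
        (starRingEnd ℂ c) • (fun s => starRingEnd ℂ (f s)) := by
      funext s; simp [mul_comm]
    show Φ (fun s => c * f (-s)) x = _
    rw [eL, eR, hΦsmul c _ (mneg hf) ⟨Cf, fun s => hCf (-s)⟩,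
      hΦsmul _ _ (mconj hf) ⟨Cf, fun s => by simpa [Complex.norm_conj] using hCf s⟩]
    simp only [ContinuousLinearMap.smul_apply]
    rw [hJsmul, Complex.conj_conj, hPf x]
  have P_exp : ∀ t : ℝ, P (fun s : ℝ => Complex.exp (Complex.I * ((t:ℂ) * (s:ℂ)))) := by
    intro t x
    have e1 : (fun s : ℝ => Complex.exp (Complex.I * ((t:ℂ) * (((-s) : ℝ):ℂ)))) =
        (fun s : ℝ => Complex.exp (Complex.I * ((((-t) : ℝ):ℂ) * (s:ℂ)))) := by
      funext s; push_cast; ring_nf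
    have e2 : (fun s : ℝ => starRingEnd ℂ (Complex.exp (Complex.I * ((t:ℂ) * (s:ℂ))))) =
        (fun s : ℝ => Complex.exp (Complex.I * ((((-t) : ℝ):ℂ) * (s:ℂ)))) := by
      funext s
      rw [← Complex.exp_conj]
      congr 1
      simp only [map_mul, Complex.conj_I, Complex.conj_ofReal]
      push_cast
      ring
    show Φ (fun s : ℝ => Complex.exp (Complex.I * ((t:ℂ) * (((-s) : ℝ):ℂ)))) x = _
    rw [e1, e2]
    exact (hU (-t) x).symm
  have mexp : ∀ t : ℝ, Measurable (fun s : ℝ => Complex.exp (Complex.I * ((t:ℂ) * (s:ℂ)))) :=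
    fun t => (Complex.continuous_exp.comp
      (continuous_const.mul (continuous_const.mul Complex.continuous_ofReal))).measurable
  have bexp : ∀ (t : ℝ) (s : ℝ),
      ‖Complex.exp (Complex.I * ((t:ℂ) * (s:ℂ)))‖ = 1 := by
    intro t s
    rw [show Complex.I * ((t:ℂ) * (s:ℂ)) = (((t*s : ℝ)):ℂ) * Complex.I by push_cast; ring,
      Complex.norm_exp_ofReal_mul_I]
  have P_one : P (fun _ : ℝ => (1:ℂ)) := by
    have h := P_exp 0
    have e : (fun s : ℝ => Complex.exp (Complex.I * ((0:ℝ) * (s:ℂ)))) = (fun _ : ℝ => (1:ℂ)) := by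
      funext s; simp
    rwa [e] at h
  have P_zero : P (fun _ : ℝ => (0:ℂ)) := by
    have h := P_smul 0 (fun _ => 1) measurable_const ⟨1, by simp⟩ P_one
    simpa using h
  have P_circle : ∀ (T : ℝ), 0 < T → ∀ g : C(AddCircle T, ℂ),
      P (fun s : ℝ => g (s : AddCircle T)) := by
    intro T hT g
    haveI : Fact (0 < T) := ⟨hT⟩
    have ccoe : Continuous (fun s : ℝ => (s : AddCircle T)) := AddCircle.continuous_mk' T
    have hspan : ∀ p : C(AddCircle T, ℂ), p ∈ Submodule.span ℂ (Set.range (@fourier T)) →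
        P (fun s : ℝ => p (s : AddCircle T)) := by
      intro p hp
      induction hp using Submodule.span_induction with
      | mem q hq =>
        obtain ⟨n, rfl⟩ := hq
        have e : (fun s : ℝ => (fourier n : C(AddCircle T, ℂ)) (s : AddCircle T)) =
            (fun s : ℝ => Complex.exp (Complex.I * ((((2 * Real.pi * n / T : ℝ)):ℂ) * (s:ℂ)))) := by
          funext s
          rw [fourier_coe_apply]
          congr 1
          push_cast
          ring
        rw [e]
        exact P_exp (2 * Real.pi * n / T)
      | zero =>
        have e : (fun s : ℝ => (0 : C(AddCircle T, ℂ)) (s : AddCircle T)) =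
            (fun _ : ℝ => (0:ℂ)) := by funext s; simp
        rw [e]; exact P_zero
      | add q r hq hr hPq hPr =>
        have e : (fun s : ℝ => (q + r : C(AddCircle T, ℂ)) (s : AddCircle T)) =
            (fun s : ℝ => q (s : AddCircle T) + r (s : AddCircle T)) := by funext s; simp
        rw [e]
        exact P_add _ _ (q.continuous.comp ccoe).measurable (r.continuous.comp ccoe).measurable
          ⟨‖q‖, fun s => by exact q.norm_coe_le_norm _⟩
          ⟨‖r‖, fun s => by exact r.norm_coe_le_norm _⟩ hPq hPr
      | smul c q hq hPq =>
        have e : (fun s : ℝ => (c • q : C(AddCircle T, ℂ)) (s : AddCircle T)) =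
            (fun s : ℝ => c * q (s : AddCircle T)) := by funext s; simp
        rw [e]
        exact P_smul c _ (q.continuous.comp ccoe).measurable
          ⟨‖q‖, fun s => by exact q.norm_coe_le_norm _⟩ hPq
    have hg' : g ∈ closure ((Submodule.span ℂ (Set.range (@fourier T)) :
        Submodule ℂ C(AddCircle T, ℂ)) : Set C(AddCircle T, ℂ)) := by
      have : g ∈ (Submodule.span ℂ (Set.range (@fourier T))).topologicalClosure := by
        rw [span_fourier_closure_eq_top]; trivial
      exact this
    obtain ⟨u, hu_mem, hu_lim⟩ := mem_closure_iff_seq_limit.mp hg'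
    obtain ⟨N, hN⟩ := Metric.tendsto_atTop.mp hu_lim 1 one_pos
    have hvlim : Tendsto (fun n => u (n + N)) atTop (𝓝 g) :=
      hu_lim.comp (tendsto_add_atTop_nat N)
    refine P_lim (fun n s => (u (n + N)) (s : AddCircle T)) (fun s : ℝ => g (s : AddCircle T)) (‖g‖ + 1) ?_ ?_ ?_ ?_ ?_
    · exact fun n => ((u (n + N)).continuous.comp ccoe).measurable
    · exact (g.continuous.comp ccoe).measurable
    · intro n s
      have h1 : ‖u (n + N)‖ - ‖g‖ ≤ dist (u (n + N)) g := by
        rw [dist_eq_norm]; exact norm_sub_norm_le _ _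
      have h2 : dist (u (n + N)) g < 1 := hN _ (Nat.le_add_left N n)
      have := (u (n + N)).norm_coe_le_norm ((s : AddCircle T))
      linarith
    · intro s
      exact ((continuous_eval_const ((s : AddCircle T))).tendsto g).comp hvlim
    · exact fun n => hspan _ (hu_mem _)
  have P_cc : ∀ f : ℝ → ℂ, Continuous f → ∀ R : ℝ, 0 < R → (∀ s, R ≤ |s| → f s = 0) →
      P f := by
    intro f hf R hR hsupp
    obtain ⟨C, hC⟩ : ∃ C : ℝ, ∀ s, ‖f s‖ ≤ C := by
      obtain ⟨C0, hC0⟩ :=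
        (isCompact_Icc (a := -R) (b := R)).exists_bound_of_continuousOn hf.continuousOn
      refine ⟨max C0 0, fun s => ?_⟩
      rcases le_or_gt (|s|) R with h | h
      · have hm : s ∈ Icc (-R) R := by rw [mem_Icc]; exact abs_le.mp h
        have := hC0 s hm
        exact le_max_of_le_left this
      · rw [hsupp s h.le]; simp
    have hTpos : ∀ n : ℕ, (0:ℝ) < 2*R+2+n := by
      intro n; positivity
    have hhalf : ∀ n : ℕ, R + 1 ≤ (2*R+2+(n:ℝ))/2 := by
      intro n; have := Nat.cast_nonneg (α := ℝ) n; linarith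
    have hend : ∀ n : ℕ, f (-((2*R+2+(n:ℝ))/2)) = f (-((2*R+2+(n:ℝ))/2) + (2*R+2+n)) := by
      intro n
      have h1 : f (-((2*R+2+(n:ℝ))/2)) = 0 := by
        refine hsupp _ ?_
        rw [abs_neg, abs_of_pos (by linarith [hhalf n])]
        linarith [hhalf n]
      have he : -((2*R+2+(n:ℝ))/2) + (2*R+2+(n:ℝ)) = (2*R+2+(n:ℝ))/2 := by ring
      have h2 : f (-((2*R+2+(n:ℝ))/2) + (2*R+2+n)) = 0 := by
        rw [he]
        refine hsupp _ ?_
        rw [abs_of_pos (by linarith [hhalf n])]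
        linarith [hhalf n]
      rw [h1, h2]
    refine P_lim (fun n =>
        haveI : Fact ((0:ℝ) < 2*R+2+n) := ⟨hTpos n⟩
        fun s : ℝ => AddCircle.liftIco (2*R+2+(n:ℝ)) (-((2*R+2+(n:ℝ))/2)) f ↑s) f C
      ?_ hf.measurable ?_ ?_ ?_
    · intro n
      haveI : Fact ((0:ℝ) < 2*R+2+n) := ⟨hTpos n⟩
      exact ((AddCircle.liftIco_continuous (hend n) hf.continuousOn).comp
        (AddCircle.continuous_mk' _)).measurable
    · intro n s
      haveI : Fact ((0:ℝ) < 2*R+2+n) := ⟨hTpos n⟩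
      exact hC _
    · intro s
      refine Filter.Tendsto.congr' ?_ tendsto_const_nhds
      filter_upwards [eventually_ge_atTop ⌈2*|s|⌉₊] with n hn
      haveI : Fact ((0:ℝ) < 2*R+2+n) := ⟨hTpos n⟩
      have h1 : 2*|s| ≤ (n:ℝ) := le_trans (Nat.le_ceil _) (by exact_mod_cast hn)
      have hs : s ∈ Ico (-((2*R+2+(n:ℝ))/2)) (-((2*R+2+(n:ℝ))/2) + (2*R+2+(n:ℝ))) := by
        constructor
        · have := neg_abs_le s; linarith
        · have := le_abs_self s; linarith
      exact (AddCircle.liftIco_coe_apply hs).symm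
    · intro n
      haveI : Fact ((0:ℝ) < 2*R+2+n) := ⟨hTpos n⟩
      exact P_circle _ (hTpos n)
        ⟨_, AddCircle.liftIco_continuous (hend n) hf.continuousOn⟩
  have hcl01 : ∀ x : ℝ, 0 ≤ max 0 (min 1 x) ∧ max 0 (min 1 x) ≤ 1 :=
    fun x => ⟨le_max_left _ _, max_le zero_le_one (min_le_left _ _)⟩
  have hcl0 : ∀ x : ℝ, x ≤ 0 → max 0 (min 1 x) = 0 :=
    fun x hx => max_eq_left ((min_le_right _ _).trans hx)
  have hcl1 : ∀ x : ℝ, 1 ≤ x → max 0 (min 1 x) = 1 := by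
    intro x hx; rw [min_eq_left hx]; exact max_eq_right zero_le_one
  have P_Ioc : ∀ a b : ℝ, a < b → P (Set.indicator (Ioc a b) (fun _ => (1:ℂ))) := by
    intro a b hab
    refine P_lim (fun n s => ((max 0 (min 1 ((n+1)*(s-a))) *
        max 0 (min 1 (1+(n+1)*(b-s))) : ℝ) : ℂ))
      (Set.indicator (Ioc a b) (fun _ => (1:ℂ))) 1 ?_
      (measurable_const.indicator measurableSet_Ioc) ?_ ?_ ?_
    · intro n
      apply Continuous.measurable
      apply Complex.continuous_ofReal.comp
      apply Continuous.mul
      · exact continuous_const.max (continuous_const.min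
          (continuous_const.mul (continuous_id.sub continuous_const)))
      · exact continuous_const.max (continuous_const.min
          (continuous_const.add (continuous_const.mul (continuous_const.sub continuous_id))))
    · intro n s
      rw [Complex.norm_real, Real.norm_of_nonneg (mul_nonneg (hcl01 _).1 (hcl01 _).1)]
      exact mul_le_one₀ (hcl01 _).2 (hcl01 _).1 (hcl01 _).2
    · intro s
      by_cases hmem : s ∈ Ioc a b
      · rw [Set.indicator_of_mem hmem]
        obtain ⟨h1, h2⟩ := hmem
        refine Filter.Tendsto.congr' ?_ tendsto_const_nhds
        filter_upwards [eventually_ge_atTop ⌈1/(s-a)⌉₊] with n hn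
        have hna : 1/(s-a) ≤ (n:ℝ) := le_trans (Nat.le_ceil _) (by exact_mod_cast hn)
        have e1 : (1:ℝ) ≤ (n+1)*(s-a) := by
          rw [div_le_iff₀ (by linarith)] at hna
          nlinarith
        have e2 : (1:ℝ) ≤ 1+(n+1)*(b-s) := by nlinarith [Nat.cast_nonneg (α := ℝ) n]
        rw [hcl1 _ e1, hcl1 _ e2]
        norm_num
      · rw [Set.indicator_of_notMem hmem]
        rw [mem_Ioc] at hmem
        push_neg at hmem
        rcases le_or_gt s a with h | h
        · refine Filter.Tendsto.congr' ?_ tendsto_const_nhds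
          filter_upwards with n
          have e1 : (n+1:ℝ)*(s-a) ≤ 0 :=
            mul_nonpos_of_nonneg_of_nonpos (by positivity) (by linarith)
          rw [hcl0 _ e1, zero_mul]
          norm_num
        · have hb : b < s := hmem h
          refine Filter.Tendsto.congr' ?_ tendsto_const_nhds
          filter_upwards [eventually_ge_atTop ⌈1/(s-b)⌉₊] with n hn
          have hnb : 1/(s-b) ≤ (n:ℝ) := le_trans (Nat.le_ceil _) (by exact_mod_cast hn)
          have e2 : 1+(n+1:ℝ)*(b-s) ≤ 0 := by
            rw [div_le_iff₀ (by linarith)] at hnb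
            nlinarith
          rw [hcl0 _ e2, mul_zero]
          norm_num
    · intro n
      show P (fun s => ((max 0 (min 1 ((n+1)*(s-a))) *
        max 0 (min 1 (1+(n+1)*(b-s))) : ℝ) : ℂ))
      have hcont : Continuous (fun s => ((max 0 (min 1 ((n+1)*(s-a))) *
          max 0 (min 1 (1+(n+1)*(b-s))) : ℝ) : ℂ)) := by
        apply Complex.continuous_ofReal.comp
        apply Continuous.mul
        · exact continuous_const.max (continuous_const.min
            (continuous_const.mul (continuous_id.sub continuous_const)))
        · exact continuous_const.max (continuous_const.min
            (continuous_const.add (continuous_const.mul (continuous_const.sub continuous_id))))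
      refine P_cc _ hcont (max (|a|) (|b|+1) + 1) (by positivity) ?_
      · intro s hs
        rcases le_or_gt 0 s with h | h
        · rw [_root_.abs_of_nonneg h] at hs
          have hbs : b + 1 ≤ s := by
            have := le_abs_self b
            have := le_max_right (|a|) (|b|+1)
            linarith
          have e2 : 1+(n+1:ℝ)*(b-s) ≤ 0 := by nlinarith [Nat.cast_nonneg (α := ℝ) n]
          rw [hcl0 _ e2, mul_zero]
          norm_num
        · rw [_root_.abs_of_neg h] at hs
          have has : s ≤ a := by
            have := neg_abs_le a
            have := le_max_left (|a|) (|b|+1)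
            linarith
          have e1 : (n+1:ℝ)*(s-a) ≤ 0 :=
            mul_nonpos_of_nonneg_of_nonpos (by positivity) (by linarith)
          rw [hcl0 _ e1, zero_mul]
          norm_num
  have hind_le : ∀ (B : Set ℝ) (s : ℝ), ‖Set.indicator B (fun _ => (1:ℂ)) s‖ ≤ 1 := by
    intro B s; by_cases h : s ∈ B <;> simp [h]
  have P_ind : ∀ B : Set ℝ, MeasurableSet B → P (Set.indicator B (fun _ => (1:ℂ))) := by
    have h_eq : (inferInstance : MeasurableSpace ℝ) =
        MeasurableSpace.generateFrom { S : Set ℝ | ∃ l u, l < u ∧ Ioc l u = S } :=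
      borel_eq_generateFrom_Ioc ℝ
    have h_pi : IsPiSystem { S : Set ℝ | ∃ l u, l < u ∧ Ioc l u = S } := by
      simpa using isPiSystem_Ioc (id : ℝ → ℝ) (id : ℝ → ℝ)
    intro B hB
    refine MeasurableSpace.induction_on_inter (C := fun B _ => P (Set.indicator B (fun _ => (1:ℂ)))) h_eq h_pi ?_ ?_ ?_ ?_ B hB
    · show P (Set.indicator (∅ : Set ℝ) (fun _ => (1:ℂ)))
      rw [Set.indicator_empty]
      exact P_zero
    · rintro t ⟨l, u, hlu, rfl⟩
      show P (Set.indicator (Ioc l u) (fun _ => (1:ℂ)))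
      exact P_Ioc l u hlu
    · intro t htm hPt
      show P (Set.indicator tᶜ (fun _ => (1:ℂ)))
      have e : Set.indicator tᶜ (fun _ => (1:ℂ)) =
          fun s => 1 + (-1) * (Set.indicator t (fun _ => (1:ℂ)) s) := by
        funext s
        by_cases h : s ∈ t <;> simp [h]
      rw [e]
      exact P_add _ _ measurable_const
        ((measurable_const.indicator htm).const_mul (-1))
        ⟨1, by simp⟩ ⟨1, fun s => by
          rw [show (-1 : ℂ) * (Set.indicator t (fun _ => (1:ℂ)) s) =
            -(Set.indicator t (fun _ => (1:ℂ)) s) by ring, norm_neg]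
          exact hind_le t s⟩
        P_one (P_smul (-1) _ (measurable_const.indicator htm) ⟨1, hind_le t⟩ hPt)
    · intro g hdisj hmeas hQ
      have hmeasInd : ∀ i, Measurable (Set.indicator (g i) (fun _ => (1:ℂ))) :=
        fun i => measurable_const.indicator (hmeas i)
      have hFmeas : ∀ n, Measurable (fun s => ∑ i ∈ Finset.range n,
          Set.indicator (g i) (fun _ => (1:ℂ)) s) :=
        fun n => Finset.measurable_sum _ (fun i _ => hmeasInd i)
      have hsum_one : ∀ (n : ℕ) (s : ℝ) (i : ℕ), i ∈ Finset.range n → s ∈ g i →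
          ∑ j ∈ Finset.range n, Set.indicator (g j) (fun _ => (1:ℂ)) s = 1 := by
        intro n s i hi hsi
        rw [Finset.sum_eq_single_of_mem i hi]
        · simp [Set.indicator_of_mem hsi]
        · intro j hj hji
          have hnm : s ∉ g j := fun hsj =>
            Set.disjoint_left.mp (hdisj hji) hsj hsi
          simp [Set.indicator_of_notMem hnm]
      have hPF : ∀ n, P (fun s => ∑ i ∈ Finset.range n,
          Set.indicator (g i) (fun _ => (1:ℂ)) s) := by
        intro n
        induction n with
        | zero => simpa using P_zero
        | succ m ih =>
          have e : (fun s => ∑ i ∈ Finset.range (m+1),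
              Set.indicator (g i) (fun _ => (1:ℂ)) s)
              = fun s => (∑ i ∈ Finset.range m, Set.indicator (g i) (fun _ => (1:ℂ)) s)
                + Set.indicator (g m) (fun _ => (1:ℂ)) s := by
            funext s; rw [Finset.sum_range_succ]
          rw [e]
          refine P_add _ _ (hFmeas m) (hmeasInd m) ⟨m, fun s => ?_⟩ ⟨1, hind_le _⟩ ih (hQ m)
          refine (norm_sum_le _ _).trans ?_
          refine le_trans (Finset.sum_le_sum (fun i _ => hind_le (g i) s)) ?_
          simp
      show P (Set.indicator (⋃ i, g i) (fun _ => (1:ℂ)))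
      refine P_lim _ _ 1 hFmeas (measurable_const.indicator (MeasurableSet.iUnion hmeas))
        ?_ ?_ hPF
      · intro n s
        by_cases h : ∃ i ∈ Finset.range n, s ∈ g i
        · obtain ⟨i, hi, hsi⟩ := h
          rw [hsum_one n s i hi hsi]
          simp
        · push_neg at h
          rw [Finset.sum_eq_zero (fun j hj => by
            simp [Set.indicator_of_notMem (h j hj)])]
          simp
      · intro s
        by_cases hs : s ∈ ⋃ i, g i
        · obtain ⟨i, hsi⟩ := mem_iUnion.mp hs
          rw [Set.indicator_of_mem hs]
          refine Filter.Tendsto.congr' ?_ tendsto_const_nhds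
          filter_upwards [eventually_ge_atTop (i+1)] with n hn
          exact (hsum_one n s i (Finset.mem_range.mpr hn) hsi).symm
        · rw [Set.indicator_of_notMem hs]
          refine Filter.Tendsto.congr' ?_ tendsto_const_nhds
          filter_upwards with n
          refine (Finset.sum_eq_zero (fun j hj => ?_)).symm
          exact Set.indicator_of_notMem (fun hsj => hs (mem_iUnion_of_mem j hsj)) _
  have bddSimple : ∀ g : SimpleFunc ℝ ℂ, ∃ C, ∀ s, ‖g s‖ ≤ C := by
    intro g
    obtain ⟨C, hC⟩ := (g.map (fun z => ‖z‖)).exists_forall_le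
    exact ⟨C, fun s => hC s⟩
  have P_simple : ∀ g : SimpleFunc ℝ ℂ, P ⇑g := by
    intro g
    induction g using SimpleFunc.induction with
    | const c hs =>
      rename_i t
      have e : ⇑(SimpleFunc.piecewise t hs (SimpleFunc.const ℝ c) (SimpleFunc.const ℝ 0)) =
          fun s => c * (Set.indicator t (fun _ => (1:ℂ)) s) := by
        funext s
        rw [SimpleFunc.coe_piecewise]
        by_cases h : s ∈ t <;>
          simp [Set.piecewise, h, Set.indicator_of_mem, Set.indicator_of_notMem]
      rw [e]
      exact P_smul c _ (measurable_const.indicator hs) ⟨1, hind_le t⟩ (P_ind t hs)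
    | add hdis hf hg =>
      rename_i f g
      have e : ⇑(f + g) = fun s => f s + g s := rfl
      rw [e]
      exact P_add _ _ f.measurable g.measurable (bddSimple f) (bddSimple g) hf hg
  have P_gen : ∀ f : ℝ → ℂ, Measurable f → (∃ C, ∀ s, ‖f s‖ ≤ C) → P f := by
    intro f hf hb
    obtain ⟨C, hC⟩ := hb
    refine P_lim (fun n => ⇑(SimpleFunc.approxOn f hf univ 0 (mem_univ 0) n)) f (C + C)
      (fun n => (SimpleFunc.approxOn f hf univ 0 (mem_univ 0) n).measurable) hf ?_ ?_
      (fun n => P_simple _)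
    · intro n s
      refine (SimpleFunc.norm_approxOn_zero_le hf (mem_univ 0) s n).trans ?_
      exact add_le_add (hC s) (hC s)
    · intro s
      exact SimpleFunc.tendsto_approxOn hf (mem_univ 0) (by simp)
  refine ⟨P_gen, ?_⟩
  intro B hB x
  have h := P_gen (Set.indicator B (fun _ => (1:ℂ)))
    (measurable_const.indicator hB) ⟨1, hind_le B⟩ x
  have e1 : (fun s => Set.indicator B (fun _ => (1:ℂ)) (-s)) =
      Set.indicator (-B) (fun _ => (1:ℂ)) := by
    funext s
    by_cases h1 : s ∈ -B
    · rw [Set.indicator_of_mem h1, Set.indicator_of_mem (Set.mem_neg.mp h1)]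
    · rw [Set.indicator_of_notMem h1,
        Set.indicator_of_notMem (fun hh => h1 (Set.mem_neg.mpr hh))]
  have e2 : (fun s => starRingEnd ℂ (Set.indicator B (fun _ => (1:ℂ)) s)) =
      Set.indicator B (fun _ => (1:ℂ)) := by
    funext s
    by_cases h1 : s ∈ B <;> simp [h1]
  rw [e1, e2] at h
  exact h
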